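/- The total number of non-root records over all rooted labeled trees on {1,...,n} equals (1/n) times the sum, over all rooted labeled trees on {1,...,n}, of the total height of all vertices. -/

import Mathlib

open scoped Classical

def IsTreeFun {n : ℕ} (f : Fin n → Fin n) : Prop :=
  ∃ r, f r = r ∧ ∀ v, ∃ k, f^[k] v = r

def IsRec {n : ℕ} (f : Fin n → Fin n) (v : Fin n) : Prop :=
  ∀ k, f^[k] v ≤ v

noncomputable def ht {n : ℕ} (f : Fin n → Fin n) (v : Fin n) : ℕ :=
  sInf {m | f (f^[m] v) = f^[m] v}

namespace Stmt10

variable {n : ℕ} {f : Fin n → Fin n}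


variable {n : ℕ} {f : Fin n → Fin n}

lemma ht_set_nonempty (hf : IsTreeFun f) (v : Fin n) :
    {m | f (f^[m] v) = f^[m] v}.Nonempty := by
  obtain ⟨r, hr, hall⟩ := hf
  obtain ⟨k, hk⟩ := hall v
  exact ⟨k, by simp only [Set.mem_setOf_eq, hk, hr]⟩

lemma ht_spec (hf : IsTreeFun f) (v : Fin n) :
    f (f^[ht f v] v) = f^[ht f v] v := Nat.sInf_mem (ht_set_nonempty hf v)

lemma mem_ht_iff (hf : IsTreeFun f) {v : Fin n} {k : ℕ} :
    f (f^[k] v) = f^[k] v ↔ ht f v ≤ k := by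
  constructor
  · intro h; exact Nat.sInf_le h
  · intro h
    obtain ⟨s, rfl⟩ := Nat.exists_eq_add_of_le h
    have h1 : f^[ht f v + s] v = f^[ht f v] v := by
      rw [Nat.add_comm, Function.iterate_add_apply]
      exact Function.iterate_fixed (ht_spec hf v) s
    rw [h1]; exact ht_spec hf v

lemma iter_ge (hf : IsTreeFun f) {v : Fin n} {k : ℕ} (h : ht f v ≤ k) :
    f^[k] v = f^[ht f v] v := by
  obtain ⟨s, rfl⟩ := Nat.exists_eq_add_of_le h
  rw [Nat.add_comm, Function.iterate_add_apply]
  exact Function.iterate_fixed (ht_spec hf v) s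

lemma lt_ht_ne (hf : IsTreeFun f) {v : Fin n} {j : ℕ} (h : j < ht f v) :
    f (f^[j] v) ≠ f^[j] v := by
  intro hc
  have := (mem_ht_iff hf).1 hc
  omega

lemma ht_pos (hf : IsTreeFun f) {a : Fin n} (ha : f a ≠ a) : 0 < ht f a := by
  rcases Nat.eq_zero_or_pos (ht f a) with h | h
  · exfalso
    have h2 := ht_spec hf a
    rw [h] at h2
    simp at h2
    exact ha h2
  · exact h

lemma ht_iterate (hf : IsTreeFun f) {v : Fin n} {j : ℕ} (hj : j ≤ ht f v) :
    ht f (f^[j] v) = ht f v - j := by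
  have hset : {m | f (f^[m] (f^[j] v)) = f^[m] (f^[j] v)} = Set.Ici (ht f v - j) := by
    ext m
    simp only [Set.mem_setOf_eq, Set.mem_Ici, ← Function.iterate_add_apply]
    rw [mem_ht_iff hf]
    omega
  rw [ht, hset, csInf_Ici]

lemma iter_inj (hf : IsTreeFun f) {v : Fin n} {i j : ℕ} (hi : i ≤ ht f v) (hj : j ≤ ht f v)
    (h : f^[i] v = f^[j] v) : i = j := by
  have h1 := ht_iterate hf hi
  have h2 := ht_iterate hf hj
  rw [h, h2] at h1
  omega

lemma root_eq (hf : IsTreeFun f) {a b : Fin n} (ha : f a = a) (hb : f b = b) : a = b := by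
  obtain ⟨r, hr, hall⟩ := hf
  have key : ∀ c, f c = c → c = r := by
    intro c hc
    obtain ⟨k, hk⟩ := hall c
    rw [Function.iterate_fixed hc] at hk
    exact hk
  rw [key a ha, key b hb]

lemma iter_ne_self (hf : IsTreeFun f) {w : Fin n} (hw : f w ≠ w) {k : ℕ} (hk : 0 < k) :
    f^[k] w ≠ w := by
  intro hc
  by_cases h : k ≤ ht f w
  · have : f^[0] w = f^[k] w := by simpa using hc.symm
    have := iter_inj hf (Nat.zero_le _) h this
    omega
  · push_neg at h
    have h1 : f^[k] w = f^[ht f w] w := iter_ge hf h.le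
    rw [h1] at hc
    apply hw
    conv_lhs => rw [← hc]
    rw [ht_spec hf w, hc]

lemma ht_eq_card (hf : IsTreeFun f) (v : Fin n) :
    ht f v = (Finset.univ.filter fun w => (∃ k, f^[k] v = w) ∧ f w ≠ w).card := by
  have himg : Finset.image (fun j => f^[j] v) (Finset.range (ht f v))
      = Finset.univ.filter fun w => (∃ k, f^[k] v = w) ∧ f w ≠ w := by
    ext w
    simp only [Finset.mem_image, Finset.mem_range, Finset.mem_filter, Finset.mem_univ, true_and]
    constructor
    · rintro ⟨j, hj, rfl⟩
      exact ⟨⟨j, rfl⟩, lt_ht_ne hf hj⟩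
    · rintro ⟨⟨k, rfl⟩, hne⟩
      refine ⟨k, ?_, rfl⟩
      by_contra hk
      push_neg at hk
      have h1 := iter_ge hf hk
      exact hne (by rw [h1]; exact ht_spec hf v)
  rw [← himg, Finset.card_image_of_injOn, Finset.card_range]
  intro i hi j hj hij
  simp only [Finset.coe_range, Set.mem_Iio] at hi hj
  exact iter_inj hf hi.le hj.le hij


variable {n : ℕ} {f : Fin n → Fin n}

noncomputable def rev (f : Fin n → Fin n) (a : Fin n) (m : ℕ) : Fin n → Fin n := fun z =>
  if z = a then (if f (f^[m] a) = f^[m] a then a else f^[m + 1] a)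
  else if hj : ∃ j, 0 < j ∧ j ≤ m ∧ f^[j] a = z then f^[Nat.find hj - 1] a
  else f z

lemma rev_base (f : Fin n → Fin n) (a : Fin n) (m : ℕ) :
    rev f a m a = if f (f^[m] a) = f^[m] a then a else f^[m + 1] a := by
  simp [rev]

lemma rev_seg {a : Fin n} {m : ℕ}
    (hdist : ∀ i j, i ≤ m → j ≤ m → f^[i] a = f^[j] a → i = j)
    {j : ℕ} (hj0 : 0 < j) (hjm : j ≤ m) : rev f a m (f^[j] a) = f^[j - 1] a := by
  have hne : f^[j] a ≠ a := by
    intro hc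
    have : f^[j] a = f^[0] a := by simpa using hc
    have := hdist j 0 hjm (Nat.zero_le _) this
    omega
  have hex : ∃ i, 0 < i ∧ i ≤ m ∧ f^[i] a = f^[j] a := ⟨j, hj0, hjm, rfl⟩
  simp only [rev, if_neg hne, dif_pos hex]
  have hspec := Nat.find_spec hex
  have heq : Nat.find hex = j := hdist _ _ hspec.2.1 hjm hspec.2.2
  rw [heq]

lemma rev_other {a z : Fin n} {m : ℕ} (h1 : z ≠ a)
    (h2 : ∀ j, 0 < j → j ≤ m → f^[j] a ≠ z) : rev f a m z = f z := by
  simp only [rev, if_neg h1]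
  rw [dif_neg]
  rintro ⟨j, hj1, hj2, hj3⟩
  exact h2 j hj1 hj2 hj3

lemma seg_dist (hf : IsTreeFun f) {a : Fin n} {m : ℕ} (hm : m ≤ ht f a) :
    ∀ i j, i ≤ m → j ≤ m → f^[i] a = f^[j] a → i = j :=
  fun _ _ hi hj h => iter_inj hf (hi.trans hm) (hj.trans hm) h

lemma rev_iter_seg (hf : IsTreeFun f) {a : Fin n} {m : ℕ} (hm : m ≤ ht f a)
    {j : ℕ} (hj : j ≤ m) : ∀ i, i ≤ j → (rev f a m)^[i] (f^[j] a) = f^[j - i] a := by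
  intro i
  induction i with
  | zero => simp
  | succ i ih =>
    intro hi
    rw [Function.iterate_succ_apply', ih (by omega)]
    have h1 : 0 < j - i := by omega
    have harith : j - i - 1 = j - (i + 1) := by omega
    rw [rev_seg (seg_dist hf hm) h1 (by omega), harith]

lemma rev_root_case (hf : IsTreeFun f) {a : Fin n} {m : ℕ} (hm' : m = ht f a) :
    rev f a m a = a := by
  rw [rev_base, if_pos]
  rw [hm']
  exact ht_spec hf a

lemma rev_base_iter_root (hf : IsTreeFun f) {a : Fin n} {m : ℕ} (hm' : m = ht f a) :
    ∀ s, (rev f a m)^[s] a = a :=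
  fun s => Function.iterate_fixed (rev_root_case hf hm') s

lemma rev_base_lt (hf : IsTreeFun f) {a : Fin n} {m : ℕ} (hm' : m < ht f a) :
    rev f a m a = f^[m + 1] a := by
  rw [rev_base, if_neg (lt_ht_ne hf hm')]

lemma rev_tail (hf : IsTreeFun f) {a : Fin n} {m : ℕ} (hm' : m < ht f a)
    {k : ℕ} (hk : m + 1 ≤ k) : rev f a m (f^[k] a) = f^[k + 1] a := by
  by_cases hkht : k ≤ ht f a
  · have h1 : f^[k] a ≠ a := by
      intro hc
      have : f^[k] a = f^[0] a := by simpa using hc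
      have := iter_inj hf hkht (Nat.zero_le _) this
      omega
    have h2 : ∀ j, 0 < j → j ≤ m → f^[j] a ≠ f^[k] a := by
      intro j hj1 hj2 hc
      have := iter_inj hf (hj2.trans hm'.le) hkht hc
      omega
    rw [rev_other h1 h2]
    exact (Function.iterate_succ_apply' f k a).symm
  · push_neg at hkht
    have hk2 : f^[k] a = f^[ht f a] a := iter_ge hf hkht.le
    have hk3 : f^[k + 1] a = f^[ht f a] a := iter_ge hf (by omega)
    rw [hk2, hk3]
    have h1 : f^[ht f a] a ≠ a := by
      intro hc
      have : f^[ht f a] a = f^[0] a := by simpa using hc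
      have := iter_inj hf le_rfl (Nat.zero_le _) this
      omega
    have h2 : ∀ j, 0 < j → j ≤ m → f^[j] a ≠ f^[ht f a] a := by
      intro j hj1 hj2 hc
      have := iter_inj hf (hj2.trans hm'.le) le_rfl hc
      omega
    rw [rev_other h1 h2]
    exact ht_spec hf a

lemma rev_from_base (hf : IsTreeFun f) {a : Fin n} {m : ℕ} (hm' : m < ht f a) :
    ∀ s, 1 ≤ s → (rev f a m)^[s] a = f^[m + s] a := by
  intro s hs
  induction s with
  | zero => omega
  | succ s ih =>
    rcases Nat.eq_zero_or_pos s with rfl | hs1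
    · simpa using rev_base_lt hf hm'
    · rw [Function.iterate_succ_apply', ih hs1, rev_tail hf hm' (by omega)]
      congr 1

lemma rev_tree (hf : IsTreeFun f) {a : Fin n} {m : ℕ} (hm : m ≤ ht f a) (ha : f a ≠ a) :
    IsTreeFun (rev f a m) := by
  set g := rev f a m with hg
  by_cases hmht : m = ht f a
  · refine ⟨a, rev_root_case hf hmht, ?_⟩
    have main : ∀ N z, ht f z ≤ N → ∃ k, g^[k] z = a := by
      intro N
      induction N with
      | zero =>
        intro z hz
        have hzr : f z = z := by
          have : f (f^[0] z) = f^[0] z := (mem_ht_iff hf).2 (by omega)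
          simpa using this
        have : z = f^[ht f a] a := root_eq hf hzr (ht_spec hf a)
        refine ⟨m, ?_⟩
        rw [this, ← hmht]
        simpa using rev_iter_seg hf hm le_rfl m le_rfl
      | succ N ih =>
        intro z hz
        by_cases hD : ∃ j, j ≤ m ∧ f^[j] a = z
        · obtain ⟨j, hj, rfl⟩ := hD
          exact ⟨j, by simpa using rev_iter_seg hf hm hj j le_rfl⟩
        · push_neg at hD
          have hz0 : f z ≠ z := by
            intro hc
            have h3 : z = f^[ht f a] a := root_eq hf hc (ht_spec hf a)
            exact hD m le_rfl (by rw [hmht]; exact h3.symm)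
          have hgz : g z = f z := by
            apply rev_other
            · intro hc
              exact hD 0 (Nat.zero_le _) (by simpa using hc.symm)
            · intro j hj1 hj2
              exact hD j hj2
          have hht : ht f (f z) = ht f z - 1 := by
            have := ht_iterate hf (show 1 ≤ ht f z from ht_pos hf hz0)
            simpa using this
          obtain ⟨k, hk⟩ := ih (f z) (by omega)
          refine ⟨k + 1, ?_⟩
          rw [Function.iterate_succ_apply, hgz]
          exact hk
    exact fun z => main (ht f z) z le_rfl
  · have hmlt : m < ht f a := lt_of_le_of_ne hm hmht
    have hrne : f^[ht f a] a ≠ a := by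
      intro hc
      have : f^[ht f a] a = f^[0] a := by simpa using hc
      have := iter_inj hf le_rfl (Nat.zero_le _) this
      omega
    have hgr : g (f^[ht f a] a) = f^[ht f a] a := by
      have h2 : ∀ j, 0 < j → j ≤ m → f^[j] a ≠ f^[ht f a] a := by
        intro j hj1 hj2 hc
        have := iter_inj hf (hj2.trans hm) le_rfl hc
        omega
      exact (rev_other hrne h2).trans (ht_spec hf a)
    refine ⟨f^[ht f a] a, hgr, ?_⟩
    have main : ∀ N z, ht f z ≤ N → ∃ k, g^[k] z = f^[ht f a] a := by
      intro N
      induction N with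
      | zero =>
        intro z hz
        have hzr : f z = z := by
          have : f (f^[0] z) = f^[0] z := (mem_ht_iff hf).2 (by omega)
          simpa using this
        exact ⟨0, by simpa using root_eq hf hzr (ht_spec hf a)⟩
      | succ N ih =>
        intro z hz
        by_cases hzr : f z = z
        · exact ⟨0, by simpa using root_eq hf hzr (ht_spec hf a)⟩
        by_cases hD : ∃ j, j ≤ m ∧ f^[j] a = z
        · obtain ⟨j, hj, rfl⟩ := hD
          have h1 : g^[j] (f^[j] a) = a := by
            simpa using rev_iter_seg hf hm hj j le_rfl
          refine ⟨(ht f a - m) + j, ?_⟩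
          rw [Function.iterate_add_apply, h1, rev_from_base hf hmlt _ (by omega)]
          congr 1
          omega
        · push_neg at hD
          have hgz : g z = f z := by
            apply rev_other
            · intro hc
              exact hD 0 (Nat.zero_le _) (by simpa using hc.symm)
            · intro j hj1 hj2
              exact hD j hj2
          have hht : ht f (f z) = ht f z - 1 := by
            have := ht_iterate hf (show 1 ≤ ht f z from ht_pos hf hzr)
            simpa using this
          obtain ⟨k, hk⟩ := ih (f z) (by omega)
          refine ⟨k + 1, ?_⟩
          rw [Function.iterate_succ_apply, hgz]
          exact hk
    exact fun z => main (ht f z) z le_rfl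


variable {n : ℕ} {f : Fin n → Fin n}

noncomputable def mMax (f : Fin n → Fin n) (a : Fin n) : ℕ :=
  sInf {j | ∀ k, f^[k] a ≤ f^[j] a}

noncomputable def mHit (g : Fin n → Fin n) (w x : Fin n) : ℕ :=
  sInf {j | ∃ k, g^[k] x = g^[j] w}

lemma mMax_exists (hf : IsTreeFun f) (a : Fin n) :
    ∃ j, (∀ k, f^[k] a ≤ f^[j] a) ∧ j ≤ ht f a := by
  obtain ⟨j, hj_mem, hj_max⟩ := Finset.exists_max_image (Finset.range (ht f a + 1))
    (fun k => f^[k] a) ⟨0, by simp⟩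
  simp only [Finset.mem_range] at hj_mem
  refine ⟨j, ?_, by omega⟩
  intro k
  by_cases hk : k ≤ ht f a
  · exact hj_max k (by simp only [Finset.mem_range]; omega)
  · rw [iter_ge hf (by omega)]
    exact hj_max (ht f a) (by simp)

lemma mMax_spec (hf : IsTreeFun f) (a : Fin n) : ∀ k, f^[k] a ≤ f^[mMax f a] a := by
  obtain ⟨j, hj, _⟩ := mMax_exists hf a
  exact Nat.sInf_mem (⟨j, hj⟩ : {j | ∀ k, f^[k] a ≤ f^[j] a}.Nonempty)

lemma mMax_le_ht (hf : IsTreeFun f) (a : Fin n) : mMax f a ≤ ht f a := by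
  obtain ⟨j, hj, hjle⟩ := mMax_exists hf a
  exact le_trans (Nat.sInf_le (show j ∈ {j | ∀ k, f^[k] a ≤ f^[j] a} from hj)) hjle

lemma mMax_pos (hf : IsTreeFun f) {a : Fin n} (hnr : ¬ IsRec f a) : 0 < mMax f a := by
  rcases Nat.eq_zero_or_pos (mMax f a) with h | h
  · exfalso
    apply hnr
    intro k
    have := mMax_spec hf a k
    rw [h] at this
    simpa using this
  · exact h

lemma rev_rev {g : Fin n → Fin n} (hg : IsTreeFun g) {w : Fin n} {m : ℕ}
    (hm : m ≤ ht g w) (hw : g w ≠ w) :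
    rev (rev g w m) (g^[m] w) m = g := by
  have hseq : ∀ i, i ≤ m → (rev g w m)^[i] (g^[m] w) = g^[m - i] w :=
    rev_iter_seg hg hm le_rfl
  have hdist' : ∀ i j, i ≤ m → j ≤ m →
      (rev g w m)^[i] (g^[m] w) = (rev g w m)^[j] (g^[m] w) → i = j := by
    intro i j hi hj h
    rw [hseq i hi, hseq j hj] at h
    have := iter_inj hg (by omega) (by omega) h
    omega
  funext z
  by_cases hzD : ∃ j, j ≤ m ∧ g^[j] w = z
  · obtain ⟨j, hj, rfl⟩ := hzD
    rcases eq_or_lt_of_le hj with heq | hjm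
    · -- z = g^[m] w : base point
      rw [heq]
      have hfm : (rev g w m)^[m] (g^[m] w) = w := by simpa using hseq m le_rfl
      rw [rev_base, hfm]
      by_cases hroot : g (g^[m] w) = g^[m] w
      · have hfw : rev g w m w = w := by rw [rev_base, if_pos hroot]
        rw [if_pos hfw, hroot]
      · have hfw : rev g w m w = g^[m + 1] w := by rw [rev_base, if_neg hroot]
        have hfwne : rev g w m w ≠ w := by
          rw [hfw]
          exact iter_ne_self hg hw (by omega)
        rw [if_neg hfwne, Function.iterate_succ_apply', hfm, hfw,
          ← Function.iterate_succ_apply' g m w]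
    · -- z = g^[j] w with j < m
      have hz : g^[j] w = (rev g w m)^[m - j] (g^[m] w) := by
        rw [hseq (m - j) (by omega)]
        congr 1
        omega
      rw [hz, rev_seg hdist' (by omega : 0 < m - j) (by omega)]
      rw [hseq (m - j - 1) (by omega)]
      have harith : m - (m - j - 1) = j + 1 := by omega
      rw [harith, Function.iterate_succ_apply', ← hz]
  · push_neg at hzD
    have houter : rev (rev g w m) (g^[m] w) m z = rev g w m z := by
      apply rev_other
      · intro hc
        exact hzD m le_rfl hc.symm
      · intro i hi1 hi2 hc
        rw [hseq i hi2] at hc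
        exact hzD (m - i) (by omega) hc
    rw [houter]
    apply rev_other
    · intro hc
      exact hzD 0 (Nat.zero_le _) (by simpa using hc.symm)
    · intro j hj1 hj2 hc
      exact hzD j hj2 hc

lemma forward_main (hf : IsTreeFun f) {a v : Fin n} (ha : f a ≠ a) (hnr : ¬ IsRec f a)
    (hv : ∃ k, f^[k] v = a) :
    IsTreeFun (rev f a (mMax f a)) ∧
    IsRec (rev f a (mMax f a)) (f^[mMax f a] a) ∧
    rev f a (mMax f a) (f^[mMax f a] a) ≠ f^[mMax f a] a ∧
    (¬ ∃ k, (rev f a (mMax f a))^[k] v = f^[mMax f a] a) ∧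
    mHit (rev f a (mMax f a)) (f^[mMax f a] a) v = mMax f a ∧
    rev (rev f a (mMax f a)) (f^[mMax f a] a) (mMax f a) = f ∧
    (rev f a (mMax f a))^[mMax f a] (f^[mMax f a] a) = a := by
  set m := mMax f a with hmdef
  have hm : m ≤ ht f a := mMax_le_ht hf a
  have hm1 : 0 < m := mMax_pos hf hnr
  have hmax : ∀ k, f^[k] a ≤ f^[m] a := mMax_spec hf a
  set g := rev f a m with hgdef
  have htree : IsTreeFun g := rev_tree hf hm ha
  have hgm : g^[m] (f^[m] a) = a := by
    have := rev_iter_seg hf hm le_rfl m le_rfl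
    simpa using this
  -- i0 : first hit of a on v's path
  have hne_i0 : {k | f^[k] v = a}.Nonempty := hv
  set i0 := sInf {k | f^[k] v = a} with hi0def
  have hi0 : f^[i0] v = a := Nat.sInf_mem hne_i0
  have hi0min : ∀ i, i < i0 → f^[i] v ≠ a := fun i hi => Nat.notMem_of_lt_sInf hi
  have hi0le : i0 ≤ ht f v := by
    by_contra h
    push_neg at h
    have h1 : f^[i0] v = f^[ht f v] v := iter_ge hf h.le
    rw [hi0] at h1
    exact ha (by rw [h1]; exact ht_spec hf v)
  have hhtv : ht f v = i0 + ht f a := by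
    have h1 := ht_iterate hf hi0le
    rw [hi0] at h1
    omega
  have hpre : ∀ i, i ≤ i0 → g^[i] v = f^[i] v := by
    intro i hi
    induction i with
    | zero => simp
    | succ i ih =>
      rw [Function.iterate_succ_apply', Function.iterate_succ_apply', ih (by omega)]
      apply rev_other
      · exact hi0min i (by omega)
      · intro j hj1 hj2 hc
        have h2 : f^[j] a = f^[j + i0] v := by rw [Function.iterate_add_apply, hi0]
        rw [h2] at hc
        have := iter_inj hf (show j + i0 ≤ ht f v by omega) (show i ≤ ht f v by omega) hc
        omega
  have hnotd : ∀ d, 0 < d → d ≤ m → ¬ ∃ k, g^[k] v = f^[d] a := by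
    rintro d hd1 hd2 ⟨k, hk⟩
    have hda : f^[d] a = f^[d + i0] v := by rw [Function.iterate_add_apply, hi0]
    by_cases hki : k ≤ i0
    · rw [hpre k hki, hda] at hk
      have := iter_inj hf (show k ≤ ht f v by omega) (show d + i0 ≤ ht f v by omega) hk
      omega
    · push_neg at hki
      obtain ⟨s, rfl⟩ : ∃ s, k = i0 + s := ⟨k - i0, by omega⟩
      have hks : g^[i0 + s] v = g^[s] a := by
        rw [Nat.add_comm, Function.iterate_add_apply, hpre i0 le_rfl, hi0]
      rw [hks] at hk
      by_cases hmht : m = ht f a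
      · rw [rev_base_iter_root hf hmht s] at hk
        have : f^[0] a = f^[d] a := by simpa using hk
        have := iter_inj hf (Nat.zero_le _) (by omega) this
        omega
      · have hmlt : m < ht f a := lt_of_le_of_ne hm hmht
        rcases Nat.eq_zero_or_pos s with rfl | hs1
        · have : f^[0] a = f^[d] a := by simpa using hk
          have := iter_inj hf (Nat.zero_le _) (by omega) this
          omega
        · rw [rev_from_base hf hmlt s hs1] at hk
          by_cases hms : m + s ≤ ht f a
          · have := iter_inj hf hms (by omega) hk
            omega
          · rw [iter_ge hf (by omega)] at hk
            have := iter_inj hf le_rfl (by omega) hk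
            omega
  have hnot : ¬ ∃ k, g^[k] v = f^[m] a := hnotd m hm1 le_rfl
  have hgiter : ∀ k, ∃ j, g^[k] (f^[m] a) = f^[j] a := by
    intro k
    by_cases hkm : k ≤ m
    · exact ⟨m - k, rev_iter_seg hf hm le_rfl k hkm⟩
    · have h1 : g^[k] (f^[m] a) = g^[k - m] (g^[m] (f^[m] a)) := by
        rw [← Function.iterate_add_apply]
        congr 1
        omega
      rw [h1, hgm]
      by_cases hmht : m = ht f a
      · exact ⟨0, by simpa using rev_base_iter_root hf hmht (k - m)⟩
      · exact ⟨m + (k - m),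
          rev_from_base hf (lt_of_le_of_ne hm hmht) (k - m) (by omega)⟩
  have hrec : IsRec g (f^[m] a) := by
    intro k
    obtain ⟨j, hj⟩ := hgiter k
    rw [hj]
    exact hmax j
  have hgne : g (f^[m] a) ≠ f^[m] a := by
    have h1 : g (f^[m] a) = f^[m - 1] a := by
      have := rev_seg (f := f) (seg_dist hf hm) hm1 le_rfl
      simpa using this
    rw [h1]
    intro hc
    have := iter_inj hf (show m - 1 ≤ ht f a by omega) hm hc
    omega
  have hmhit : mHit g (f^[m] a) v = m := by
    have hmem : m ∈ {j | ∃ k, g^[k] v = g^[j] (f^[m] a)} := by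
      refine ⟨i0, ?_⟩
      rw [hpre i0 le_rfl, hi0, hgm]
    have hlt : ∀ j, j < m → j ∉ {j | ∃ k, g^[k] v = g^[j] (f^[m] a)} := by
      rintro j hj ⟨k, hk⟩
      rw [rev_iter_seg hf hm le_rfl j (by omega)] at hk
      exact hnotd (m - j) (by omega) (by omega) ⟨k, hk⟩
    have h1 : mHit g (f^[m] a) v ≤ m := Nat.sInf_le hmem
    rcases lt_or_eq_of_le h1 with h2 | h2
    · exfalso
      have h3 := Nat.sInf_mem (⟨m, hmem⟩ : {j | ∃ k, g^[k] v = g^[j] (f^[m] a)}.Nonempty)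
      exact hlt _ h2 h3
    · exact h2
  exact ⟨htree, hrec, hgne, hnot, hmhit, rev_rev hf hm ha, hgm⟩

lemma backward_main {g : Fin n → Fin n} (hg : IsTreeFun g) {w x : Fin n}
    (hrec : IsRec g w) (hw : g w ≠ w) (hnb : ¬ ∃ k, g^[k] x = w) :
    0 < mHit g w x ∧ mHit g w x ≤ ht g w ∧
    IsTreeFun (rev g w (mHit g w x)) ∧
    rev g w (mHit g w x) (g^[mHit g w x] w) ≠ g^[mHit g w x] w ∧
    (∃ k, (rev g w (mHit g w x))^[k] x = g^[mHit g w x] w) ∧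
    (¬ IsRec (rev g w (mHit g w x)) (g^[mHit g w x] w)) ∧
    mMax (rev g w (mHit g w x)) (g^[mHit g w x] w) = mHit g w x ∧
    rev (rev g w (mHit g w x)) (g^[mHit g w x] w) (mHit g w x) = g ∧
    (rev g w (mHit g w x))^[mHit g w x] (g^[mHit g w x] w) = w := by
  have hroot_mem : ∃ k, g^[k] x = g^[ht g w] w := by
    obtain ⟨r, hr, hall⟩ := id hg
    obtain ⟨k, hk⟩ := hall x
    refine ⟨k, ?_⟩
    rw [hk]
    exact root_eq hg hr (ht_spec hg w)
  have hne : {j | ∃ k, g^[k] x = g^[j] w}.Nonempty := ⟨ht g w, hroot_mem⟩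
  set m := mHit g w x with hmdef
  have hmem : ∃ k, g^[k] x = g^[m] w := Nat.sInf_mem hne
  have hmin : ∀ j, j < m → ¬ ∃ k, g^[k] x = g^[j] w := fun j hj => Nat.notMem_of_lt_sInf hj
  have hm1 : 0 < m := by
    rcases Nat.eq_zero_or_pos m with h | h
    · exfalso
      apply hnb
      obtain ⟨k, hk⟩ := hmem
      rw [h] at hk
      exact ⟨k, by simpa using hk⟩
    · exact h
  have hmle : m ≤ ht g w := by
    by_contra h
    push_neg at h
    exact hmin (ht g w) h hroot_mem
  set f' := rev g w m with hfdef
  have htree : IsTreeFun f' := rev_tree hg hmle hw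
  have hseq : ∀ i, i ≤ m → f'^[i] (g^[m] w) = g^[m - i] w := rev_iter_seg hg hmle le_rfl
  have hfm : f'^[m] (g^[m] w) = w := by simpa using hseq m le_rfl
  have hfw' : f' (g^[m] w) = g^[m - 1] w := by
    have := rev_seg (f := g) (seg_dist hg hmle) hm1 le_rfl
    simpa using this
  have hne' : f' (g^[m] w) ≠ g^[m] w := by
    rw [hfw']
    intro hc
    have := iter_inj hg (show m - 1 ≤ ht g w by omega) hmle hc
    omega
  -- prefix of x
  have hi1ne : {i | g^[i] x = g^[m] w}.Nonempty := hmem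
  set i1 := sInf {i | g^[i] x = g^[m] w} with hi1def
  have hi1 : g^[i1] x = g^[m] w := Nat.sInf_mem hi1ne
  have hi1min : ∀ i, i < i1 → g^[i] x ≠ g^[m] w := fun i hi => Nat.notMem_of_lt_sInf hi
  have hpre : ∀ i, i ≤ i1 → f'^[i] x = g^[i] x := by
    intro i hi
    induction i with
    | zero => simp
    | succ i ih =>
      rw [Function.iterate_succ_apply', Function.iterate_succ_apply', ih (by omega)]
      apply rev_other
      · intro hc
        exact hnb ⟨i, hc⟩
      · intro j hj1 hj2 hc
        rcases lt_or_eq_of_le hj2 with hjm | rfl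
        · exact hmin j hjm ⟨i, hc.symm⟩
        · exact hi1min i (by omega) hc.symm
  have hbel : ∃ k, f'^[k] x = g^[m] w := ⟨i1, by rw [hpre i1 le_rfl, hi1]⟩
  -- f'-iterates of w' = g^[m] w
  have hiter : ∀ k, ∃ i, f'^[k] (g^[m] w) = g^[i] w := by
    intro k
    by_cases hkm : k ≤ m
    · exact ⟨m - k, hseq k hkm⟩
    · have h1 : f'^[k] (g^[m] w) = f'^[k - m] (f'^[m] (g^[m] w)) := by
        rw [← Function.iterate_add_apply]
        congr 1
        omega
      rw [h1, hfm]
      by_cases hmht : m = ht g w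
      · exact ⟨0, by simpa using rev_base_iter_root hg hmht (k - m)⟩
      · exact ⟨m + (k - m),
          rev_from_base hg (lt_of_le_of_ne hmle hmht) (k - m) (by omega)⟩
  have hwlt : ∀ i, 0 < i → g^[i] w < w :=
    fun i hi => lt_of_le_of_ne (hrec i) (iter_ne_self hg hw hi)
  have hnrec : ¬ IsRec f' (g^[m] w) := by
    intro hr
    have h1 := hr m
    rw [hfm] at h1
    exact absurd h1 (not_le.mpr (hwlt m hm1))
  have hmmax : mMax f' (g^[m] w) = m := by
    have hmem2 : m ∈ {j | ∀ k, f'^[k] (g^[m] w) ≤ f'^[j] (g^[m] w)} := by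
      intro k
      obtain ⟨i, hi⟩ := hiter k
      rw [hi, hfm]
      exact hrec i
    have hlt2 : ∀ j, j < m → j ∉ {j | ∀ k, f'^[k] (g^[m] w) ≤ f'^[j] (g^[m] w)} := by
      intro j hj hmemj
      have h1 := hmemj m
      rw [hfm, hseq j (by omega)] at h1
      exact absurd h1 (not_le.mpr (hwlt (m - j) (by omega)))
    have h1 : mMax f' (g^[m] w) ≤ m := Nat.sInf_le hmem2
    rcases lt_or_eq_of_le h1 with h2 | h2
    · exfalso
      have h3 := Nat.sInf_mem (⟨m, hmem2⟩ :
        {j | ∀ k, f'^[k] (g^[m] w) ≤ f'^[j] (g^[m] w)}.Nonempty)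
      exact hlt2 _ h2 h3
    · exact h2
  exact ⟨hm1, hmle, htree, hne', hbel, hnrec, hmmax, rev_rev hg hmle hw, hfm⟩



-- ### the bijection maps
noncomputable def phi (q : (Fin n → Fin n) × Fin n × Fin n) :
    (Fin n → Fin n) × Fin n × Fin n :=
  if IsRec q.1 q.2.1 then q
  else (rev q.1 q.2.1 (mMax q.1 q.2.1), q.1^[mMax q.1 q.2.1] q.2.1, q.2.2)

noncomputable def psi (q : (Fin n → Fin n) × Fin n × Fin n) :
    (Fin n → Fin n) × Fin n × Fin n :=
  if ∃ k, q.1^[k] q.2.2 = q.2.1 then q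
  else (rev q.1 q.2.1 (mHit q.1 q.2.1 q.2.2), q.1^[mHit q.1 q.2.1 q.2.2] q.2.1, q.2.2)

noncomputable def SA (n : ℕ) : Finset ((Fin n → Fin n) × Fin n × Fin n) :=
  Finset.univ.filter
    (fun q => IsTreeFun q.1 ∧ (∃ k, q.1^[k] q.2.2 = q.2.1) ∧ q.1 q.2.1 ≠ q.2.1)

noncomputable def SB (n : ℕ) : Finset ((Fin n → Fin n) × Fin n × Fin n) :=
  Finset.univ.filter
    (fun q => IsTreeFun q.1 ∧ IsRec q.1 q.2.1 ∧ q.1 q.2.1 ≠ q.2.1)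

lemma phi_mem {q : (Fin n → Fin n) × Fin n × Fin n} (hq : q ∈ SA n) : phi q ∈ SB n := by
  simp only [SA, SB, Finset.mem_filter, Finset.mem_univ, true_and] at hq ⊢
  obtain ⟨htf, hbel, hne⟩ := hq
  by_cases hr : IsRec q.1 q.2.1
  · rw [phi, if_pos hr]
    exact ⟨htf, hr, hne⟩
  · rw [phi, if_neg hr]
    obtain ⟨h1, h2, h3, _⟩ := forward_main htf hne hr hbel
    exact ⟨h1, h2, h3⟩

lemma psi_mem {q : (Fin n → Fin n) × Fin n × Fin n} (hq : q ∈ SB n) : psi q ∈ SA n := by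
  simp only [SA, SB, Finset.mem_filter, Finset.mem_univ, true_and] at hq ⊢
  obtain ⟨htf, hrec, hne⟩ := hq
  by_cases hb : ∃ k, q.1^[k] q.2.2 = q.2.1
  · rw [psi, if_pos hb]
    exact ⟨htf, hb, hne⟩
  · rw [psi, if_neg hb]
    obtain ⟨_, _, h3, h4, h5, _⟩ := backward_main htf hrec hne hb
    refine ⟨h3, h5, ?_⟩
    simpa using h4

lemma psi_phi {q : (Fin n → Fin n) × Fin n × Fin n} (hq : q ∈ SA n) : psi (phi q) = q := by
  simp only [SA, Finset.mem_filter, Finset.mem_univ, true_and] at hq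
  obtain ⟨htf, hbel, hne⟩ := hq
  by_cases hr : IsRec q.1 q.2.1
  · rw [phi, if_pos hr, psi, if_pos hbel]
  · rw [phi, if_neg hr]
    obtain ⟨h1, h2, h3, h4, h5, h6, h7⟩ := forward_main htf hne hr hbel
    rw [psi]
    rw [if_neg h4]
    simp only
    rw [h5, h6, h7]

lemma phi_psi {q : (Fin n → Fin n) × Fin n × Fin n} (hq : q ∈ SB n) : phi (psi q) = q := by
  simp only [SB, Finset.mem_filter, Finset.mem_univ, true_and] at hq
  obtain ⟨htf, hrec, hne⟩ := hq
  by_cases hb : ∃ k, q.1^[k] q.2.2 = q.2.1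
  · rw [psi, if_pos hb, phi, if_pos hrec]
  · rw [psi, if_neg hb]
    obtain ⟨h1, h2, h3, h4, h5, h6, h7, h8, h9⟩ := backward_main htf hrec hne hb
    rw [phi, if_neg h6]
    simp only
    rw [h7, h8, h9]

lemma mem_SA {q : (Fin n → Fin n) × Fin n × Fin n} :
    q ∈ SA n ↔ (IsTreeFun q.1 ∧ (∃ k, q.1^[k] q.2.2 = q.2.1) ∧ q.1 q.2.1 ≠ q.2.1) := by
  simp [SA]

lemma mem_SB {q : (Fin n → Fin n) × Fin n × Fin n} :
    q ∈ SB n ↔ (IsTreeFun q.1 ∧ IsRec q.1 q.2.1 ∧ q.1 q.2.1 ≠ q.2.1) := by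
  simp [SB]

lemma card_A_eq_card_B (n : ℕ) :
    Nat.card {q : (Fin n → Fin n) × Fin n × Fin n //
        IsTreeFun q.1 ∧ (∃ k, q.1^[k] q.2.2 = q.2.1) ∧ q.1 q.2.1 ≠ q.2.1}
      = Nat.card {q : (Fin n → Fin n) × Fin n × Fin n //
        IsTreeFun q.1 ∧ IsRec q.1 q.2.1 ∧ q.1 q.2.1 ≠ q.2.1} := by
  refine Nat.card_congr ⟨fun q => ⟨phi q.1, mem_SB.1 (phi_mem (mem_SA.2 q.2))⟩,
    fun q => ⟨psi q.1, mem_SA.1 (psi_mem (mem_SB.2 q.2))⟩, ?_, ?_⟩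
  · rintro ⟨q, hq⟩
    exact Subtype.ext (psi_phi (mem_SA.2 hq))
  · rintro ⟨q, hq⟩
    exact Subtype.ext (phi_psi (mem_SB.2 hq))

lemma step_A (hf : IsTreeFun f) :
    ∑ v : Fin n, ht f v
      = Nat.card {p : Fin n × Fin n // (∃ k, f^[k] p.2 = p.1) ∧ f p.1 ≠ p.1} := by
  rw [Nat.card_eq_fintype_card, Fintype.card_subtype]
  rw [Finset.card_eq_sum_card_fiberwise
    (f := Prod.snd) (t := Finset.univ) (fun x _ => Finset.mem_univ _)]
  refine Finset.sum_congr rfl fun v _ => ?_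
  rw [ht_eq_card hf v]
  refine Finset.card_bij' (fun w _ => (w, v)) (fun p _ => p.1) ?_ ?_ ?_ ?_
  · intro w hw
    simp only [Finset.mem_filter, Finset.mem_univ, true_and] at hw ⊢
    exact ⟨hw, trivial⟩
  · intro p hp
    simp only [Finset.mem_filter, Finset.mem_univ, true_and] at hp ⊢
    obtain ⟨⟨h1, h2⟩, h3⟩ := hp
    rw [← h3]
    exact ⟨h1, h2⟩
  · intro w hw
    rfl
  · intro p hp
    simp only [Finset.mem_filter] at hp
    exact Prod.ext rfl hp.2.symm

lemma step_B (f : Fin n → Fin n) :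
    n * Nat.card {v : Fin n // IsRec f v ∧ f v ≠ v}
      = Nat.card {p : Fin n × Fin n // IsRec f p.1 ∧ f p.1 ≠ p.1} := by
  have he : {p : Fin n × Fin n // IsRec f p.1 ∧ f p.1 ≠ p.1}
      ≃ ({v : Fin n // IsRec f v ∧ f v ≠ v} × Fin n) :=
    ⟨fun p => (⟨p.1.1, p.2⟩, p.1.2), fun q => ⟨(q.1.1, q.2), q.1.2⟩,
      fun p => rfl, fun q => rfl⟩
  rw [Nat.card_congr he, Nat.card_prod, Nat.card_eq_fintype_card (α := Fin n),
    Fintype.card_fin, mul_comm]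

lemma gather (P : (Fin n → Fin n) → Fin n × Fin n → Prop) :
    Nat.card {q : (Fin n → Fin n) × Fin n × Fin n // IsTreeFun q.1 ∧ P q.1 q.2}
      = ∑ f ∈ Finset.univ.filter (fun f : Fin n → Fin n => IsTreeFun f),
          Nat.card {p : Fin n × Fin n // P f p} := by
  rw [Nat.card_eq_fintype_card, Fintype.card_subtype]
  rw [Finset.card_eq_sum_card_fiberwise
    (f := fun q => q.1) (t := Finset.univ.filter (fun f : Fin n → Fin n => IsTreeFun f))
    (fun q hq => by
      simp only [Finset.mem_filter, Finset.mem_univ, true_and] at hq ⊢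
      exact Finset.mem_coe.2 (Finset.mem_filter.2 ⟨Finset.mem_univ _, (Finset.mem_filter.1 hq).2.1⟩))]
  refine Finset.sum_congr rfl fun f hf => ?_
  simp only [Finset.mem_filter, Finset.mem_univ, true_and] at hf
  rw [Nat.card_eq_fintype_card, Fintype.card_subtype]
  refine Finset.card_bij' (fun q _ => q.2) (fun p _ => (f, p)) ?_ ?_ ?_ ?_
  · intro q hq
    simp only [Finset.mem_filter, Finset.mem_univ, true_and] at hq ⊢
    obtain ⟨⟨h1, h2⟩, h3⟩ := hq
    rw [← h3]
    exact h2
  · intro p hp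
    simp only [Finset.mem_filter, Finset.mem_univ, true_and] at hp ⊢
    exact ⟨⟨hf, hp⟩, trivial⟩
  · intro q hq
    simp only [Finset.mem_filter] at hq
    exact Prod.ext hq.2.symm rfl
  · intro p hp
    rfl

end Stmt10

/-- The total number of non-root records over all rooted labeled trees on
`{1,…,n}` equals `1/n` times the total height summed over all such trees
(stated multiplied through by `n`). -/
theorem stmt10 (n : ℕ) :
    n * ∑ f ∈ Finset.univ.filter (fun f : Fin n → Fin n => IsTreeFun f),
          Nat.card {v : Fin n // IsRec f v ∧ f v ≠ v} =
      ∑ f ∈ Finset.univ.filter (fun f : Fin n → Fin n => IsTreeFun f),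
          ∑ v : Fin n, ht f v := by
  classical
  calc n * ∑ f ∈ Finset.univ.filter (fun f : Fin n → Fin n => IsTreeFun f),
          Nat.card {v : Fin n // IsRec f v ∧ f v ≠ v}
      = ∑ f ∈ Finset.univ.filter (fun f : Fin n → Fin n => IsTreeFun f),
          Nat.card {p : Fin n × Fin n // IsRec f p.1 ∧ f p.1 ≠ p.1} := by
        rw [Finset.mul_sum]
        exact Finset.sum_congr rfl fun f _ => Stmt10.step_B f
    _ = Nat.card {q : (Fin n → Fin n) × Fin n × Fin n //
          IsTreeFun q.1 ∧ IsRec q.1 q.2.1 ∧ q.1 q.2.1 ≠ q.2.1} :=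
        (Stmt10.gather (fun f p => IsRec f p.1 ∧ f p.1 ≠ p.1)).symm
    _ = Nat.card {q : (Fin n → Fin n) × Fin n × Fin n //
          IsTreeFun q.1 ∧ (∃ k, q.1^[k] q.2.2 = q.2.1) ∧ q.1 q.2.1 ≠ q.2.1} :=
        (Stmt10.card_A_eq_card_B n).symm
    _ = ∑ f ∈ Finset.univ.filter (fun f : Fin n → Fin n => IsTreeFun f),
          Nat.card {p : Fin n × Fin n // (∃ k, f^[k] p.2 = p.1) ∧ f p.1 ≠ p.1} :=
        Stmt10.gather (fun f p => (∃ k, f^[k] p.2 = p.1) ∧ f p.1 ≠ p.1)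
    _ = ∑ f ∈ Finset.univ.filter (fun f : Fin n → Fin n => IsTreeFun f),
          ∑ v : Fin n, ht f v :=
        Finset.sum_congr rfl fun f hf => (Stmt10.step_A
          (by simpa using (Finset.mem_filter.1 hf).2)).symm
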